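/- Let F = K(x₁,…,x_ℓ) be the field of rational functions over a field K of characteristic zero, and let f₁, …, f_p ∈ F \ K with p ≥ 2. Then ∂[dlog f₁ : ⋯ : dlog f_p] = 0 if and only if there exists (h₁, …, h_p) ∈ F^p, not all zero, such that h₁f₁ + ⋯ + h_pf_p = 0 and h₁ df₁ + ⋯ + h_p df_p = 0. -/

import Mathlib

open ExteriorAlgebra MvPolynomial

set_option synthInstance.maxHeartbeats 1000000
set_option maxHeartbeats 1000000

noncomputable def wedgeList (F : Type*) {W : Type*} [Field F] [AddCommGroup W] [Module F W]
    (l : List W) : ExteriorAlgebra F W := (l.map (ι F)).prod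

noncomputable def wedge (F : Type*) {W : Type*} [Field F] [AddCommGroup W] [Module F W]
    {p : ℕ} (ω : Fin p → W) : ExteriorAlgebra F W := wedgeList F (List.ofFn ω)

noncomputable def der (F : Type*) {W : Type*} [Field F] [AddCommGroup W] [Module F W]
    {p : ℕ} (ω : Fin p → W) : ExteriorAlgebra F W :=
  ∑ k : Fin p, (-1 : F) ^ (k : ℕ) • wedgeList F ((List.ofFn ω).eraseIdx k)

/-- The field of rational functions `K(x₁, …, x_ℓ)`. -/
abbrev Fq (K : Type) [Field K] (ℓ : ℕ) : Type := FractionRing (MvPolynomial (Fin ℓ) K)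

/-- `dlog f = df / f` with values in the module of Kähler differentials `Ω¹_{F/K}`. -/
noncomputable def dlog (K : Type) [Field K] (ℓ : ℕ) (f : Fq K ℓ) : Ω[Fq K ℓ⁄K] :=
  f⁻¹ • KaehlerDifferential.D K (Fq K ℓ) f


section Aux
variable (F : Type*) {W : Type*} [Field F] [AddCommGroup W] [Module F W]

lemma wedgeList_nil : wedgeList F ([] : List W) = 1 := rfl
lemma wedgeList_cons (a : W) (l : List W) : wedgeList F (a :: l) = ι F a * wedgeList F l := by
  simp [wedgeList]
lemma wedgeList_append (l m : List W) :
    wedgeList F (l ++ m) = wedgeList F l * wedgeList F m := by simp [wedgeList]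
lemma wedgeList_ofFn {n : ℕ} (v : Fin n → W) : wedgeList F (List.ofFn v) = ιMulti F n v := by
  rw [ιMulti_apply, wedgeList, List.map_ofFn]; rfl

lemma ι_mul_wedgeList (z : W) (l : List W) :
    ι F z * wedgeList F l = (-1 : F) ^ l.length • (wedgeList F l * ι F z) := by
  induction l with
  | nil => simp [wedgeList_nil]
  | cons a l ih =>
    have hza : ι F z * ι F a = -(ι F a * ι F z) :=
      eq_neg_of_add_eq_zero_left (ι_add_mul_swap z a)
    rw [wedgeList_cons, ← mul_assoc, hza, neg_mul, mul_assoc, ih, List.length_cons,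
      pow_succ]
    rw [mul_smul_comm, ← smul_neg, mul_smul, neg_one_smul, mul_assoc]

lemma wedgeList_set_append_eq_zero (l : List W) (z : W) (k : ℕ) (hk : k < l.length) :
    wedgeList F ((l ++ [z]).set k z) = 0 := by
  have hlen : ((l ++ [z]).set k z).length = l.length + 1 := by simp
  have h1 : ((l ++ [z]).set k z)[k]'(by omega) = z :=
    List.getElem_set_self (by simp; omega)
  have h2 : ((l ++ [z]).set k z)[l.length]'(by omega) = z := by
    rw [List.getElem_set_ne (by omega)]
    rw [List.getElem_append_right (Nat.le_refl _)]
    simp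
  rw [← List.ofFn_getElem (xs := (l ++ [z]).set k z), wedgeList_ofFn]
  refine AlternatingMap.map_eq_zero_of_eq _ _ (i := ⟨k, by omega⟩) (j := ⟨l.length, by omega⟩)
    ?_ (by simp; omega)
  simp only [h1, h2]

lemma prod_sub_eq (z : W) (l : List W) :
    ((l.map fun w => ι F w - ι F z)).prod
      = ∑ k ∈ Finset.range (l.length + 1),
          (-1:F) ^ (l.length + k) • wedgeList F ((l ++ [z]).eraseIdx k) := by
  induction l with
  | nil => simp [wedgeList_nil]
  | cons a l ih =>
    have key : ∑ k ∈ Finset.range (l.length + 1),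
        (-1:F) ^ k • (ι F z * wedgeList F ((l ++ [z]).eraseIdx k))
        = wedgeList F (l ++ [z]) := by
      have hterm : ∀ k ∈ Finset.range (l.length + 1),
          (-1:F) ^ k • (ι F z * wedgeList F ((l ++ [z]).eraseIdx k))
          = wedgeList F ((l ++ [z]).set k z) := by
        intro k hk
        rw [Finset.mem_range] at hk
        have hk' : k < (l ++ [z]).length := by simp; omega
        have htk : ((l ++ [z]).take k).length = k := by simp; omega
        rw [List.eraseIdx_eq_take_drop_succ, wedgeList_append, ← mul_assoc,
          ι_mul_wedgeList, htk, smul_mul_assoc, smul_smul, ← pow_add, ← two_mul, pow_mul,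
          neg_one_sq, one_pow, one_smul]
        have : (l ++ [z]).set k z = (l ++ [z]).take k ++ z :: (l ++ [z]).drop (k + 1) := by
          rw [List.set_eq_take_append_cons_drop]
          simp only [hk', if_true]
        rw [this, wedgeList_append, wedgeList_cons, mul_assoc]
      rw [Finset.sum_congr rfl hterm, Finset.sum_range_succ]
      have hz : ∀ k ∈ Finset.range l.length, wedgeList F ((l ++ [z]).set k z) = 0 := by
        intro k hk
        exact wedgeList_set_append_eq_zero F l z k (Finset.mem_range.mp hk)
      rw [Finset.sum_eq_zero hz, zero_add, List.set_append_right _ _ (Nat.le_refl _)]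
      simp
    simp only [List.length_cons]
    rw [List.map_cons, List.prod_cons, ih, sub_mul, Finset.mul_sum, Finset.mul_sum]
    have hA : ∀ k ∈ Finset.range (l.length + 1),
        ι F a * ((-1:F) ^ (l.length + k) • wedgeList F ((l ++ [z]).eraseIdx k))
        = (-1:F) ^ (l.length + 1 + (k + 1)) •
            wedgeList F (((a :: l) ++ [z]).eraseIdx (k + 1)) := by
      intro k _
      rw [mul_smul_comm]
      congr 1
      ring
    have hB : ∑ k ∈ Finset.range (l.length + 1),
        ι F z * ((-1:F) ^ (l.length + k) • wedgeList F ((l ++ [z]).eraseIdx k))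
        = (-1:F) ^ l.length • wedgeList F (l ++ [z]) := by
      rw [← key, Finset.smul_sum]
      refine Finset.sum_congr rfl fun k _ => ?_
      rw [mul_smul_comm, smul_smul, ← pow_add]
    conv_rhs => rw [Finset.sum_range_succ']
    rw [Finset.sum_congr rfl hA, hB, List.cons_append, List.eraseIdx_cons_zero,
      sub_eq_add_neg]
    congr 1
    rw [← neg_smul]
    congr 1
    ring

lemma der_succ (n : ℕ) (ω : Fin (n + 1) → W) :
    der F ω = (-1 : F) ^ n • ιMulti F n (fun i => ω i.castSucc - ω (Fin.last n)) := by
  have h0 : List.ofFn ω = List.ofFn (fun i : Fin n => ω i.castSucc) ++ [ω (Fin.last n)] := by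
    rw [List.ofFn_succ', List.concat_eq_append]
  have hmap : (List.ofFn (fun i : Fin n => ω i.castSucc)).map
      (fun w => ι F w - ι F (ω (Fin.last n)))
      = List.ofFn (fun i : Fin n => ι F (ω i.castSucc - ω (Fin.last n))) := by
    rw [List.map_ofFn]
    congr 1
    funext i
    simp
  have key := prod_sub_eq F (ω (Fin.last n)) (List.ofFn (fun i : Fin n => ω i.castSucc))
  rw [hmap, ← h0, List.length_ofFn, ← ιMulti_apply] at key
  rw [der, Fin.sum_univ_eq_sum_range
    (fun k => (-1 : F) ^ k • wedgeList F ((List.ofFn ω).eraseIdx k)), key, Finset.smul_sum]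
  refine Finset.sum_congr rfl fun k _ => ?_
  rw [smul_smul, ← pow_add]
  congr 1
  rw [show n + (n + k) = 2 * n + k from by ring, pow_add, pow_mul, neg_one_sq, one_pow,
    one_mul]

lemma iotaMulti_eq_zero_iff {n : ℕ} (v : Fin n → W) :
    ιMulti F n v = 0 ↔ ¬ LinearIndependent F v := by
  constructor
  · intro h0 li
    classical
    have hsr : LinearIndepOn F id (Set.range v) := li.linearIndepOn_id
    let b := Module.Basis.extend hsr
    have hvmem : ∀ i, v i ∈ hsr.extend (Set.subset_univ _) := fun i =>
      hsr.subset_extend _ ⟨i, rfl⟩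
    let e : Fin n → hsr.extend (Set.subset_univ (Set.range v)) := fun i => ⟨v i, hvmem i⟩
    have hbe : ∀ i, b (e i) = v i := fun i => Module.Basis.extend_apply_self hsr ⟨v i, hvmem i⟩
    have hinj : Function.Injective e := fun i j hij => by
      apply li.injective
      simpa [e, Subtype.ext_iff] using hij
    let φ : W [⋀^Fin n]→ₗ[F] F :=
      (Matrix.detRowAlternating).compLinearMap (LinearMap.pi fun j : Fin n => b.coord (e j))
    have hφv : φ v = 1 := by
      have : (fun i => (LinearMap.pi fun j : Fin n => b.coord (e j)) (v i))
          = (1 : Matrix (Fin n) (Fin n) F) := by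
        funext i j
        simp only [LinearMap.pi_apply, Module.Basis.coord_apply]
        rw [← hbe i, Module.Basis.repr_self, Finsupp.single_apply, Matrix.one_apply]
        simp [hinj.eq_iff, eq_comm]
      rw [AlternatingMap.compLinearMap_apply, this]
      exact Matrix.det_one
    let f : ∀ i, W [⋀^Fin i]→ₗ[F] F := Function.update (fun _ => 0) n φ
    have := liftAlternating_apply_ιMulti f v
    rw [h0, map_zero] at this
    simp only [f, Function.update_self, hφv] at this
    exact zero_ne_one this
  · exact fun h => AlternatingMap.map_linearDependent _ v h

lemma der_eq_zero_iff (n : ℕ) (ω : Fin (n + 1) → W) :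
    der F ω = 0 ↔
      ¬ LinearIndependent F (fun i : Fin n => ω i.castSucc - ω (Fin.last n)) := by
  rw [der_succ, smul_eq_zero, ← iotaMulti_eq_zero_iff]
  have : ((-1 : F) ^ n) ≠ 0 := pow_ne_zero _ (by norm_num)
  tauto

end Aux

lemma aux_forward {K : Type} [Field K] [CharZero K] {ℓ : ℕ} {n : ℕ}
    (f : Fin (n+1) → Fq K ℓ) (hf0 : ∀ i, f i ≠ 0)
    (hG : ¬ LinearIndependent (Fq K ℓ)
      (fun i : Fin n => dlog K ℓ (f i.castSucc) - dlog K ℓ (f (Fin.last n)))) :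
      ∃ h : Fin (n+1) → Fq K ℓ, h ≠ 0 ∧ (∑ i, h i * f i) = 0 ∧
        (∑ i, h i • KaehlerDifferential.D K (Fq K ℓ) (f i)) = 0 := by
  rw [Fintype.not_linearIndependent_iff] at hG
  obtain ⟨g, hsum, j, hgj⟩ := hG
  refine ⟨Fin.snoc (fun i : Fin n => g i * (f i.castSucc)⁻¹)
    (-(∑ i, g i) * (f (Fin.last n))⁻¹), ?_, ?_, ?_⟩
  · intro h0
    have : g j * (f j.castSucc)⁻¹ = 0 := by
      have := congrFun h0 j.castSucc
      simpa using this
    exact (mul_ne_zero hgj (inv_ne_zero (hf0 _))) this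
  · rw [Fin.sum_univ_castSucc]
    simp only [Fin.snoc_castSucc, Fin.snoc_last]
    have h1 : ∀ i : Fin n, g i * (f i.castSucc)⁻¹ * f i.castSucc = g i := fun i => by
      rw [mul_assoc, inv_mul_cancel₀ (hf0 _), mul_one]
    rw [Finset.sum_congr rfl fun i _ => h1 i, mul_assoc,
      inv_mul_cancel₀ (hf0 _), mul_one]
    ring
  · rw [Fin.sum_univ_castSucc]
    simp only [Fin.snoc_castSucc, Fin.snoc_last]
    have h1 : ∀ i : Fin n, (g i * (f i.castSucc)⁻¹) • KaehlerDifferential.D K (Fq K ℓ) (f i.castSucc)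
        = g i • dlog K ℓ (f i.castSucc) := fun i => by
      rw [mul_smul]; rfl
    have h2 : ((-∑ i, g i) * (f (Fin.last n))⁻¹) • KaehlerDifferential.D K (Fq K ℓ) (f (Fin.last n))
        = (-∑ i, g i) • dlog K ℓ (f (Fin.last n)) := by
      rw [mul_smul]; rfl
    rw [Finset.sum_congr rfl fun i _ => h1 i, h2, neg_smul, Finset.sum_smul,
      ← sub_eq_add_neg, ← Finset.sum_sub_distrib, ← hsum]
    exact Finset.sum_congr rfl fun i _ => (smul_sub _ _ _).symm

lemma aux_backward {K : Type} [Field K] [CharZero K] {ℓ : ℕ} {n : ℕ}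
    (f : Fin (n+1) → Fq K ℓ) (hf0 : ∀ i, f i ≠ 0)
    (h : Fin (n+1) → Fq K ℓ) (hne : h ≠ 0) (hs1 : (∑ i, h i * f i) = 0)
    (hs2 : (∑ i, h i • KaehlerDifferential.D K (Fq K ℓ) (f i)) = 0) :
    ¬ LinearIndependent (Fq K ℓ)
      (fun i : Fin n => dlog K ℓ (f i.castSucc) - dlog K ℓ (f (Fin.last n))) := by
  rw [Fintype.not_linearIndependent_iff]
  refine ⟨fun i => h i.castSucc * f i.castSucc, ?_, ?_⟩
  · -- the sum vanishes
    have hlast : ∑ i : Fin n, h i.castSucc * f i.castSucc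
        = -(h (Fin.last n) * f (Fin.last n)) := by
      rw [Fin.sum_univ_castSucc] at hs1
      linear_combination hs1
    have h1 : ∀ i : Fin n, (h i.castSucc * f i.castSucc) • dlog K ℓ (f i.castSucc)
        = h i.castSucc • KaehlerDifferential.D K (Fq K ℓ) (f i.castSucc) := fun i => by
      rw [dlog, smul_smul, mul_assoc, mul_inv_cancel₀ (hf0 _), mul_one]
    calc ∑ i : Fin n, (h i.castSucc * f i.castSucc) •
            (dlog K ℓ (f i.castSucc) - dlog K ℓ (f (Fin.last n)))
        = ∑ i : Fin n, (h i.castSucc * f i.castSucc) • dlog K ℓ (f i.castSucc)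
          - (∑ i : Fin n, h i.castSucc * f i.castSucc) • dlog K ℓ (f (Fin.last n)) := by
          rw [Finset.sum_smul, ← Finset.sum_sub_distrib]
          exact Finset.sum_congr rfl fun i _ => smul_sub _ _ _
      _ = ∑ i : Fin n, h i.castSucc • KaehlerDifferential.D K (Fq K ℓ) (f i.castSucc)
          + h (Fin.last n) • KaehlerDifferential.D K (Fq K ℓ) (f (Fin.last n)) := by
          rw [Finset.sum_congr rfl fun i _ => h1 i, hlast, neg_smul, sub_neg_eq_add]
          congr 1
          rw [dlog, smul_smul, mul_assoc, mul_inv_cancel₀ (hf0 _), mul_one]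
      _ = 0 := by rw [Fin.sum_univ_castSucc] at hs2; exact hs2
  · -- some coefficient is nonzero
    by_contra hall
    push_neg at hall
    have hc : ∀ i : Fin n, h i.castSucc = 0 := fun i => by
      have := hall i
      rcases mul_eq_zero.mp this with h' | h'
      · exact h'
      · exact absurd h' (hf0 _)
    have hlastzero : h (Fin.last n) = 0 := by
      rw [Fin.sum_univ_castSucc] at hs1
      rw [Finset.sum_eq_zero (fun i _ => by rw [hc i, zero_mul]), zero_add] at hs1
      exact (mul_eq_zero.mp hs1).resolve_right (hf0 _)
    apply hne
    funext i
    refine Fin.lastCases ?_ ?_ i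
    · exact hlastzero
    · exact hc

/-- `∂[dlog f₁ : ⋯ : dlog f_p] = 0` iff there exists `(h₁,…,h_p) ≠ 0` with
`Σ h_i f_i = 0` and `Σ h_i df_i = 0`. -/
theorem der_dlog_eq_zero_iff {K : Type} [Field K] [CharZero K] {ℓ : ℕ} {p : ℕ}
    (hp : 2 ≤ p) (f : Fin p → Fq K ℓ)
    (hf : ∀ i, f i ∉ Set.range (algebraMap K (Fq K ℓ))) :
    der (Fq K ℓ) (fun i => dlog K ℓ (f i)) = 0 ↔
      ∃ h : Fin p → Fq K ℓ, h ≠ 0 ∧ (∑ i, h i * f i) = 0 ∧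
        (∑ i, h i • KaehlerDifferential.D K (Fq K ℓ) (f i)) = 0 := by
  obtain ⟨n, rfl⟩ : ∃ n, p = n + 1 := ⟨p - 1, by omega⟩
  have hf0 : ∀ i, f i ≠ 0 := fun i hi => hf i ⟨0, by rw [map_zero, hi]⟩
  rw [der_eq_zero_iff]
  constructor
  · exact aux_forward f hf0
  · rintro ⟨h, hne, hs1, hs2⟩
    exact aux_backward f hf0 h hne hs1 hs2
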